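/- arXiv:1604.01868 — 2 statements merged into one kernel-verified Lean document; each statement's English description precedes it below -/
import Mathlib

section
/- Let n ≥ 1 be an integer and let a_1, …, a_n be integers with a_i ≤ −2 for every i. Then the symmetric n × n real tridiagonal matrix M defined by M_{ii} = a_i, M_{ij} = 1 when |i − j| = 1, and M_{ij} = 0 when |i − j| ≥ 2, is negative definite. -/
open Matrix

/-- The symmetric tridiagonal intersection form of a linear plumbing tree with
vertex weights `a_1, …, a_n`, all `≤ -2`, is negative definite. -/
theorem statement4 (n : ℕ) (hn : 1 ≤ n) (a : Fin n → ℤ) (ha : ∀ i, a i ≤ -2)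
    (M : Matrix (Fin n) (Fin n) ℝ)
    (hM : ∀ i j : Fin n, M i j =
      if i = j then (a i : ℝ) else if ((i : ℤ) - (j : ℤ)).natAbs = 1 then 1 else 0) :
    ∀ x : Fin n → ℝ, x ≠ 0 → x ⬝ᵥ M.mulVec x < 0 := by
  obtain ⟨m, rfl⟩ : ∃ m, n = m + 1 := ⟨n - 1, by omega⟩
  intro x hx
  set y : ℕ → ℝ := fun k => if h : k < m + 1 then x ⟨k, h⟩ else 0 with hy
  set b : ℕ → ℝ := fun k => if h : k < m + 1 then (a ⟨k, h⟩ : ℝ) else -2 with hb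
  have hyn : ∀ k, m + 1 ≤ k → y k = 0 := by
    intro k hk; simp only [hy]; rw [dif_neg (by omega)]
  have hyval : ∀ j : Fin (m + 1), y (j : ℕ) = x j := by
    intro j; simp only [hy]; rw [dif_pos j.isLt]
  have hb2 : ∀ k, b k + 2 ≤ 0 := by
    intro k; simp only [hb]; split
    · rename_i h
      have h1 := ha ⟨k, h⟩
      have h2 : (a ⟨k, h⟩ : ℝ) ≤ -2 := by exact_mod_cast h1
      linarith
    · norm_num
  -- step 1: the quadratic form as a double sum over `range (m+1)`
  have hQ : x ⬝ᵥ M.mulVec x =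
      ∑ i ∈ Finset.range (m + 1), ∑ j ∈ Finset.range (m + 1),
        (if i = j then b i else if ((i : ℤ) - (j : ℤ)).natAbs = 1 then (1 : ℝ) else 0)
          * (y i * y j) := by
    rw [dotProduct]
    simp only [mulVec, dotProduct, Finset.mul_sum]
    rw [← Fin.sum_univ_eq_sum_range]
    refine Finset.sum_congr rfl fun i _ => ?_
    rw [← Fin.sum_univ_eq_sum_range]
    refine Finset.sum_congr rfl fun j _ => ?_
    rw [hM, hyval, hyval]
    by_cases h1 : i = j
    · rw [if_pos h1, if_pos (by exact_mod_cast congrArg Fin.val h1)]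
      subst h1
      have : b (i : ℕ) = (a i : ℝ) := by
        simp only [hb]; rw [dif_pos i.isLt]
      rw [this]; ring
    · have h1' : (i : ℕ) ≠ (j : ℕ) := fun h => h1 (Fin.ext h)
      rw [if_neg h1, if_neg h1']
      split <;> ring
  -- step 2: compute the inner sum
  have inner : ∀ i ∈ Finset.range (m + 1),
      (∑ j ∈ Finset.range (m + 1),
        (if i = j then b i else if ((i : ℤ) - (j : ℤ)).natAbs = 1 then (1 : ℝ) else 0)
          * (y i * y j))
      = b i * (y i * y i) + y i * y (i + 1) + (if i = 0 then 0 else y i * y (i - 1)) := by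
    intro i hi
    rw [Finset.mem_range] at hi
    have hsplit : ∀ j,
        (if i = j then b i else if ((i : ℤ) - (j : ℤ)).natAbs = 1 then (1 : ℝ) else 0)
          * (y i * y j)
        = (if j = i then b i * (y i * y i) else 0) + (if j = i + 1 then y i * y j else 0)
          + (if i ≠ 0 ∧ j = i - 1 then y i * y j else 0) := by
      intro j
      by_cases h1 : i = j
      · subst h1
        rw [if_pos rfl, if_pos rfl, if_neg (by omega), if_neg (by omega)]
        ring
      · rw [if_neg h1, if_neg (Ne.symm h1)]
        by_cases h2 : ((i : ℤ) - (j : ℤ)).natAbs = 1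
        · rw [if_pos h2]
          rcases (by omega : j = i + 1 ∨ (i ≠ 0 ∧ j = i - 1)) with h | h
          · rw [if_pos h, if_neg (by omega)]; ring
          · rw [if_neg (by omega), if_pos h]; ring
        · rw [if_neg h2, if_neg (by omega), if_neg (by omega)]; ring
    rw [Finset.sum_congr rfl fun j _ => hsplit j, Finset.sum_add_distrib,
      Finset.sum_add_distrib, Finset.sum_ite_eq' (Finset.range (m + 1)) i
        (fun _ => b i * (y i * y i)),
      Finset.sum_ite_eq' (Finset.range (m + 1)) (i + 1) (fun j => y i * y j),
      if_pos (Finset.mem_range.2 hi)]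
    have e2 : (if i + 1 ∈ Finset.range (m + 1) then y i * y (i + 1) else 0)
        = y i * y (i + 1) := by
      split
      · rfl
      · rename_i h; rw [hyn (i + 1) (by rw [Finset.mem_range] at h; omega), mul_zero]
    rw [e2]
    congr 1
    by_cases hi0 : i = 0
    · subst hi0; simp
    · have : ∀ j ∈ Finset.range (m + 1),
          (if i ≠ 0 ∧ j = i - 1 then y i * y j else 0)
          = (if j = i - 1 then y i * y j else 0) := by
        intro j _; simp [hi0]
      rw [Finset.sum_congr rfl this,
        Finset.sum_ite_eq' (Finset.range (m + 1)) (i - 1) (fun j => y i * y j),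
        if_pos (Finset.mem_range.2 (by omega)), if_neg hi0]
  -- step 3: assemble
  have hQ2 : x ⬝ᵥ M.mulVec x
      = (∑ i ∈ Finset.range (m + 1), b i * (y i * y i))
        + (∑ i ∈ Finset.range (m + 1), y i * y (i + 1))
        + ∑ i ∈ Finset.range (m + 1), (if i = 0 then 0 else y i * y (i - 1)) := by
    rw [hQ, Finset.sum_congr rfl inner, Finset.sum_add_distrib, Finset.sum_add_distrib]
  have h3 : (∑ i ∈ Finset.range (m + 1), (if i = 0 then (0:ℝ) else y i * y (i - 1)))
      = ∑ i ∈ Finset.range m, y i * y (i + 1) := by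
    rw [Finset.sum_range_succ' (fun i => if i = 0 then (0:ℝ) else y i * y (i - 1)) m]
    rw [if_pos rfl, add_zero]
    refine Finset.sum_congr rfl fun i _ => ?_
    rw [if_neg (Nat.succ_ne_zero i), Nat.add_sub_cancel, mul_comm]
  have h2s : (∑ i ∈ Finset.range (m + 1), y i * y (i + 1))
      = ∑ i ∈ Finset.range m, y i * y (i + 1) := by
    rw [Finset.sum_range_succ, hyn (m + 1) le_rfl, mul_zero, add_zero]
  -- abbreviations
  have e1 : (∑ i ∈ Finset.range (m + 1), (y i) ^ 2)
      = (∑ i ∈ Finset.range m, (y i) ^ 2) + (y m) ^ 2 := Finset.sum_range_succ _ m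
  have e2 : (∑ i ∈ Finset.range (m + 1), (y i) ^ 2)
      = (∑ i ∈ Finset.range m, (y (i + 1)) ^ 2) + (y 0) ^ 2 := Finset.sum_range_succ' _ m
  have hD : (∑ i ∈ Finset.range m, (y i - y (i + 1)) ^ 2)
      = (∑ i ∈ Finset.range m, (y i) ^ 2) + (∑ i ∈ Finset.range m, (y (i + 1)) ^ 2)
        - 2 * ∑ i ∈ Finset.range m, y i * y (i + 1) := by
    have h : ∀ i ∈ Finset.range m, (y i - y (i + 1)) ^ 2
        = y i ^ 2 + y (i + 1) ^ 2 - 2 * (y i * y (i + 1)) := fun i _ => by ring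
    rw [Finset.sum_congr rfl h, Finset.sum_sub_distrib, Finset.sum_add_distrib,
      ← Finset.mul_sum]
  have hT : (∑ i ∈ Finset.range (m + 1), (b i + 2) * (y i) ^ 2)
      = (∑ i ∈ Finset.range (m + 1), b i * (y i * y i))
        + 2 * ∑ i ∈ Finset.range (m + 1), (y i) ^ 2 := by
    have h : ∀ i ∈ Finset.range (m + 1), (b i + 2) * y i ^ 2
        = b i * (y i * y i) + 2 * y i ^ 2 := fun i _ => by ring
    rw [Finset.sum_congr rfl h, Finset.sum_add_distrib, ← Finset.mul_sum]
  have hkey : x ⬝ᵥ M.mulVec x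
      = (∑ i ∈ Finset.range (m + 1), (b i + 2) * (y i) ^ 2)
        - (y 0) ^ 2 - (y m) ^ 2 - ∑ i ∈ Finset.range m, (y i - y (i + 1)) ^ 2 := by
    rw [hQ2, h3, h2s]; rw [hT, hD]; linarith [e1, e2]
  have hTnonpos : (∑ i ∈ Finset.range (m + 1), (b i + 2) * (y i) ^ 2) ≤ 0 :=
    Finset.sum_nonpos fun i _ => mul_nonpos_of_nonpos_of_nonneg (hb2 i) (sq_nonneg _)
  have hDnonneg : (0:ℝ) ≤ ∑ i ∈ Finset.range m, (y i - y (i + 1)) ^ 2 :=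
    Finset.sum_nonneg fun i _ => sq_nonneg _
  -- positivity of y0² + D
  obtain ⟨j, hj⟩ : ∃ j, x j ≠ 0 := by
    by_contra h; push_neg at h; exact hx (funext h)
  have hpos : 0 < (y 0) ^ 2 + ∑ i ∈ Finset.range m, (y i - y (i + 1)) ^ 2 := by
    by_cases h0 : y 0 = 0
    · have hst : ∃ i, i < m ∧ y i ≠ y (i + 1) := by
        by_contra hc
        push_neg at hc
        have hall : ∀ k, k ≤ m → y k = 0 := by
          intro k
          induction k with
          | zero => intro _; exact h0
          | succ k ih => intro hk; rw [← hc k (by omega)]; exact ih (by omega)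
        exact hj (by rw [← hyval j]; exact hall j (by omega))
      obtain ⟨i, him, hne⟩ := hst
      have hterm : 0 < (y i - y (i + 1)) ^ 2 :=
        lt_of_le_of_ne (sq_nonneg _) (Ne.symm (pow_ne_zero _ (sub_ne_zero.2 hne)))
      have : 0 < ∑ i ∈ Finset.range m, (y i - y (i + 1)) ^ 2 :=
        Finset.sum_pos' (fun i _ => sq_nonneg _) ⟨i, Finset.mem_range.2 him, hterm⟩
      nlinarith [sq_nonneg (y 0)]
    · have : 0 < (y 0) ^ 2 := lt_of_le_of_ne (sq_nonneg _) (Ne.symm (pow_ne_zero _ h0))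
      linarith
  have := sq_nonneg (y m)
  linarith [hkey, hTnonpos, hpos, this]
end

section
/- Let F = ℤ/2ℤ, let I be a finite index set, let V be the F-vector space with basis (y_i)_{i ∈ I}, and let ∂ : V → V be an F-linear map with ∂ ∘ ∂ = 0. For i, j ∈ I write d(y_i, y_j) ∈ F for the y_j-coordinate of ∂(y_i) in the given basis. Suppose k, l ∈ I are distinct indices with d(y_k, y_l) = 1. Let W be the F-vector space with basis (y_i)_{i ∈ I, i ≠ k, l}, let π : V → W be the F-linear projection sending y_i to y_i for i ≠ k, l and sending y_k and y_l to 0, and define the F-linear map ∂̄ : W → W by ∂̄(y_i) = π(∂(y_i) + d(y_i, y_l)·∂(y_k)) for i ≠ k, l. Then ∂̄ ∘ ∂̄ = 0, and (W, ∂̄) is chain homotopy equivalent to (V, ∂): there exist F-linear maps p : V → W and ι : W → V with p ∘ ∂ = ∂̄ ∘ p and ι ∘ ∂̄ = ∂ ∘ ι, together with an F-linear map h : V → V such that p ∘ ι = id_W and ι ∘ p + id_V = ∂ ∘ h + h ∘ ∂. -/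
section GaussElim

variable {I : Type*} [DecidableEq I]

/-- Extension by zero `W → V`. -/
private def extMap (k l : I) :
    ({i : I // i ≠ k ∧ i ≠ l} → ZMod 2) →ₗ[ZMod 2] (I → ZMod 2) where
  toFun w i := if h : i ≠ k ∧ i ≠ l then w ⟨i, h⟩ else 0
  map_add' x y := by funext i; by_cases h : i ≠ k ∧ i ≠ l <;> simp [h]
  map_smul' c x := by funext i; by_cases h : i ≠ k ∧ i ≠ l <;> simp [h]

private lemma extMap_apply (k l : I) (w : {i : I // i ≠ k ∧ i ≠ l} → ZMod 2) (i : I) :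
    extMap k l w i = if h : i ≠ k ∧ i ≠ l then w ⟨i, h⟩ else 0 := rfl

/-- Coordinate restriction `V → W`. -/
private def resMap (k l : I) :
    (I → ZMod 2) →ₗ[ZMod 2] ({i : I // i ≠ k ∧ i ≠ l} → ZMod 2) :=
  LinearMap.funLeft (ZMod 2) (ZMod 2) Subtype.val

private lemma resMap_apply (k l : I) (v : I → ZMod 2) (i : {i : I // i ≠ k ∧ i ≠ l}) :
    resMap k l v i = v i.1 := rfl

/-- The homotopy `h(v) = v l • e_k`. -/
private def hmap (k l : I) : (I → ZMod 2) →ₗ[ZMod 2] (I → ZMod 2) :=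
  (LinearMap.proj l).smulRight (Pi.single k 1)

private lemma hmap_apply (k l : I) (v : I → ZMod 2) :
    hmap k l v = v l • Pi.single k 1 := rfl

private def phi (k l : I) (D : (I → ZMod 2) →ₗ[ZMod 2] (I → ZMod 2)) :
    (I → ZMod 2) →ₗ[ZMod 2] (I → ZMod 2) :=
  LinearMap.id + D ∘ₗ hmap k l + hmap k l ∘ₗ D

private lemma phi_apply (k l : I) (D : (I → ZMod 2) →ₗ[ZMod 2] (I → ZMod 2))
    (v : I → ZMod 2) :
    phi k l D v = v + v l • D (Pi.single k 1) + (D v) l • (Pi.single k 1 : I → ZMod 2) := by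
  simp [phi, hmap_apply, map_smul]

private lemma two_eq_zero (a : ZMod 2) : a + a = 0 := by revert a; decide

variable {k l : I} {D : (I → ZMod 2) →ₗ[ZMod 2] (I → ZMod 2)}
variable (hD : D ∘ₗ D = 0) (hkl : k ≠ l) (hd : D (Pi.single k 1) l = 1)

include hD in
private lemma hD2 (v : I → ZMod 2) : D (D v) = 0 := by
  have := LinearMap.ext_iff.mp hD v
  simpa using this

include hkl hd in
private lemma phi_l (v : I → ZMod 2) : phi k l D v l = 0 := by
  rw [phi_apply]
  simp [Pi.single_eq_of_ne (Ne.symm hkl), hd, two_eq_zero]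

include hD in
private lemma phi_D (v : I → ZMod 2) : phi k l D (D v) = D (phi k l D v) := by
  rw [phi_apply, phi_apply, hD2 hD]
  simp [map_add, map_smul, hD2 hD]

include hD hkl hd in
private lemma phi_phi (v : I → ZMod 2) : phi k l D (phi k l D v) = phi k l D v := by
  conv_lhs => rw [phi_apply k l D (phi k l D v)]
  rw [phi_l hkl hd, ← phi_D hD, phi_l hkl hd]
  simp

include hkl hd in
private lemma phi_ek : phi k l D (Pi.single k 1) = 0 := by
  rw [phi_apply, hd]
  funext i
  simp only [Pi.add_apply, Pi.smul_apply, smul_eq_mul,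
    Pi.single_eq_of_ne (Ne.symm hkl), zero_mul, add_zero, one_mul]
  exact two_eq_zero _

include hkl hd in
private lemma ext_res_phi (v : I → ZMod 2) :
    extMap k l (resMap k l (phi k l D v)) =
      phi k l D v + (phi k l D v k) • (Pi.single k 1 : I → ZMod 2) := by
  funext j
  rw [extMap_apply]
  by_cases hj : j ≠ k ∧ j ≠ l
  · rw [dif_pos hj, resMap_apply]
    simp only [Pi.add_apply, Pi.smul_apply, smul_eq_mul,
      Pi.single_eq_of_ne hj.1, mul_zero, add_zero]
  · rw [dif_neg hj]
    rcases not_and_or.mp hj with hj1 | hj1 <;> push_neg at hj1 <;> subst hj1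
    · simp only [Pi.add_apply, Pi.smul_apply, smul_eq_mul, Pi.single_eq_same,
        mul_one]
      exact (two_eq_zero _).symm
    · simp only [Pi.add_apply, Pi.smul_apply, smul_eq_mul, phi_l hkl hd,
        Pi.single_eq_of_ne (Ne.symm hkl), mul_zero, add_zero]

-- ι ∘ p = φ pointwise
include hD hkl hd in
private lemma iota_p (v : I → ZMod 2) :
    phi k l D (extMap k l (resMap k l (phi k l D v))) = phi k l D v := by
  rw [ext_res_phi hkl hd, map_add, map_smul, phi_ek hkl hd, phi_phi hD hkl hd]
  simp

include hkl in
private lemma ext_single (i : {i : I // i ≠ k ∧ i ≠ l}) :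
    extMap k l (Pi.single i 1) = Pi.single i.1 (1 : ZMod 2) := by
  funext j
  rw [extMap_apply]
  by_cases hj : j ≠ k ∧ j ≠ l
  · rcases eq_or_ne (⟨j, hj⟩ : {i : I // i ≠ k ∧ i ≠ l}) i with h | h
    · rw [dif_pos hj, h, Pi.single_eq_same]
      have : j = i.1 := by rw [← h]
      rw [this, Pi.single_eq_same]
    · rw [dif_pos hj, Pi.single_eq_of_ne h]
      have : j ≠ i.1 := fun hji => h (Subtype.ext hji)
      rw [Pi.single_eq_of_ne this]
  · rw [dif_neg hj]
    have : j ≠ i.1 := by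
      rcases not_and_or.mp hj with hj1 | hj1 <;> push_neg at hj1 <;> subst hj1
      · exact Ne.symm i.2.1
      · exact Ne.symm i.2.2
    rw [Pi.single_eq_of_ne this]

end GaussElim

/-- Gaussian-elimination reduction lemma for chain complexes over `F = ℤ/2ℤ`
(Rasmussen, Lemma 5.1).  Let `V` be the `F`-vector space with finite basis
`(y_i)_{i ∈ I}` (modelled as `I → ZMod 2` with basis `Pi.single i 1`), and let
`D : V →ₗ V` be a differential (`D ∘ D = 0`).  Write `d(y_i, y_j) = D(y_i) j`.
Given distinct `k, l ∈ I` with `d(y_k, y_l) = 1`, the complex `(W, Dbar)` on the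
basis `(y_i)_{i ≠ k, l}`, where `Dbar(y_i) = π(D(y_i) + d(y_i, y_l) • D(y_k))`
and `π` is the coordinate projection, is a chain complex (`Dbar ∘ Dbar = 0`)
chain homotopy equivalent to `(V, D)`. -/
theorem statement6 (I : Type*) [Fintype I] [DecidableEq I]
    (D : (I → ZMod 2) →ₗ[ZMod 2] (I → ZMod 2))
    (hD : D ∘ₗ D = 0)
    (k l : I) (hkl : k ≠ l)
    (hd : D (Pi.single k 1) l = 1) :
    ∃ Dbar : ({i : I // i ≠ k ∧ i ≠ l} → ZMod 2) →ₗ[ZMod 2]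
        ({i : I // i ≠ k ∧ i ≠ l} → ZMod 2),
      (∀ i : {i : I // i ≠ k ∧ i ≠ l},
        Dbar (Pi.single i 1) =
          LinearMap.funLeft (ZMod 2) (ZMod 2) Subtype.val
            (D (Pi.single i.1 1) + (D (Pi.single i.1 1) l) • D (Pi.single k 1))) ∧
      Dbar ∘ₗ Dbar = 0 ∧
      ∃ (p : (I → ZMod 2) →ₗ[ZMod 2] ({i : I // i ≠ k ∧ i ≠ l} → ZMod 2))
        (ι : ({i : I // i ≠ k ∧ i ≠ l} → ZMod 2) →ₗ[ZMod 2] (I → ZMod 2))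
        (h : (I → ZMod 2) →ₗ[ZMod 2] (I → ZMod 2)),
        p ∘ₗ D = Dbar ∘ₗ p ∧
        ι ∘ₗ Dbar = D ∘ₗ ι ∧
        p ∘ₗ ι = LinearMap.id ∧
        ι ∘ₗ p + LinearMap.id = D ∘ₗ h + h ∘ₗ D := by
  classical
  set Φ := phi k l D with hΦ
  set p := resMap k l ∘ₗ Φ with hp
  set ι := Φ ∘ₗ extMap k l with hι
  set Dbar := p ∘ₗ D ∘ₗ ι with hDbar
  have hpapp : ∀ v, p v = resMap k l (Φ v) := fun v => rfl
  have hιapp : ∀ w, ι w = Φ (extMap k l w) := fun w => rfl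
  have hιp : ∀ v, ι (p v) = Φ v := fun v => iota_p hD hkl hd v
  refine ⟨Dbar, ?_, ?_, p, ι, hmap k l, ?_, ?_, ?_, ?_⟩
  · -- basis formula
    intro i
    have h1 : ι (Pi.single i 1) =
        Pi.single i.1 1 + (D (Pi.single i.1 1) l) • (Pi.single k 1 : I → ZMod 2) := by
      rw [hιapp, ext_single hkl, hΦ, phi_apply,
        Pi.single_eq_of_ne (Ne.symm i.2.2)]
      simp
    have h2 : Dbar (Pi.single i 1) = p (D (ι (Pi.single i 1))) := rfl
    rw [h2, h1, map_add, map_smul]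
    set x := D (Pi.single i.1 1) + (D (Pi.single i.1 1) l) • D (Pi.single k 1) with hx
    have hxl : x l = 0 := by
      rw [hx]; simp [hd, two_eq_zero]
    have hDx : D x = 0 := by
      rw [hx, map_add, map_smul, hD2 hD, hD2 hD]; simp
    have : Φ x = x := by
      rw [hΦ, phi_apply, hxl, hDx]; simp
    calc p (D (Pi.single i.1 1) + D (Pi.single i.1 1) l • D (Pi.single k 1))
        = resMap k l (Φ x) := by rw [hpapp, hx]
      _ = resMap k l x := by rw [this]
      _ = _ := rfl
  · -- Dbar ∘ Dbar = 0
    refine LinearMap.ext fun w => ?_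
    show Dbar (Dbar w) = 0
    have : Dbar (Dbar w) = p (D (ι (p (D (ι w))))) := rfl
    rw [this, hιp, ← phi_D hD, hD2 hD]
    simp [hΦ]
  · -- p D = Dbar p
    refine LinearMap.ext fun v => ?_
    show p (D v) = Dbar (p v)
    have : Dbar (p v) = p (D (ι (p v))) := rfl
    rw [this, hιp]
    rw [hpapp, hpapp, ← phi_D hD, hΦ, phi_phi hD hkl hd]
  · -- ι Dbar = D ι
    refine LinearMap.ext fun w => ?_
    show ι (Dbar w) = D (ι w)
    have : ι (Dbar w) = ι (p (D (ι w))) := rfl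
    rw [this, hιp, hιapp, hΦ, ← phi_D hD, phi_phi hD hkl hd]
  · -- p ι = id
    refine LinearMap.ext fun w => ?_
    show p (ι w) = w
    rw [hpapp, hιapp, hΦ, phi_phi hD hkl hd]
    funext i
    rw [resMap_apply, phi_apply]
    have h1 : extMap k l w l = 0 := by
      rw [extMap_apply, dif_neg]; intro h; exact h.2 rfl
    have h3 : extMap k l w i.1 = w i := by rw [extMap_apply]; exact dif_pos i.2
    simp only [Pi.add_apply, Pi.smul_apply, smul_eq_mul, h1, h3, zero_mul,
      Pi.single_eq_of_ne i.2.1, mul_zero, add_zero]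
  · -- homotopy
    refine LinearMap.ext fun v => ?_
    show ι (p v) + v = D (hmap k l v) + hmap k l (D v)
    rw [hιp, hΦ, phi_apply, hmap_apply, hmap_apply, map_smul]
    have : ∀ a b c : I → ZMod 2, (a + b + c) + a = (b + c) + (a + a) := by
      intro a b c; abel
    rw [this]
    have haa : v + v = 0 := by funext i; exact two_eq_zero (v i)
    rw [haa, add_zero]
end
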